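/- (Discrete energy dissipation, matrix form.) Let N ≥ 1, m ∈ ℝᴺ with positive entries and M = diag(m), let Q, U ∈ ℝᴺˣᴺ be symmetric with Q positive semidefinite, and let σ, γ, Δt > 0. Let I ⊆ ℝ be an open interval, ψ₊ : I → ℝ convex and differentiable, and ψ̄₋ : ℝ → ℝ concave and differentiable. Suppose the vectors n^k, n^{k+1} ∈ Iᴺ and φ^k, φ^{k+1} ∈ ℝᴺ satisfy: (i) M(n^{k+1} − n^k) = −Δt·Uξ, where ξ_i = φ^{k+1}_i + ψ₊'(n^{k+1}_i); (ii) σQφ^{k+1} + Mφ^{k+1} = γQn^{k+1} + M·ψ̄₋'(υ^k), where υ^ℓ := n^ℓ − (σ/γ)φ^ℓ and ψ̄₋' is applied componentwise. Define the discrete energy E(n,φ) := (γ/2)·(n − (σ/γ)φ)ᵀQ(n − (σ/γ)φ) + (σ/(2γ))·Σ_i m_i φ_i² + Σ_i m_i·[ψ₊(n_i) + ψ̄₋(n_i − (σ/γ)φ_i)]. Then E(n^{k+1}, φ^{k+1}) + Δt·ξᵀUξ ≤ E(n^k, φ^k). -/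

import Mathlib

open Set Finset

private lemma convex_tangent' {S : Set ℝ} {f : ℝ → ℝ} (hf : ConvexOn ℝ S f)
    {x y : ℝ} (hx : x ∈ S) (hy : y ∈ S) (hd : DifferentiableAt ℝ f x) :
    f x - f y ≤ deriv f x * (x - y) := by
  rcases lt_trichotomy x y with h | h | h
  · have h1 := hf.deriv_le_slope hx hy h hd
    rw [slope_def_field] at h1
    have h2 : deriv f x * (y - x) ≤ f y - f x := by
      have := (le_div_iff₀ (by linarith : (0:ℝ) < y - x)).mp h1
      linarith
    nlinarith
  · simp [h]
  · have h1 := hf.slope_le_deriv hy hx h hd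
    rw [slope_def_field] at h1
    have := (div_le_iff₀ (by linarith : (0:ℝ) < x - y)).mp h1
    linarith

private lemma concave_tangent' {f : ℝ → ℝ} (hf : ConcaveOn ℝ Set.univ f)
    (hd : Differentiable ℝ f) (x y : ℝ) :
    f y - f x ≤ deriv f x * (y - x) := by
  have h := convex_tangent' hf.neg (mem_univ x) (mem_univ y) (hd x).neg
  have hd' : deriv (-f) x = -deriv f x := by
    rw [show (-f) = fun y => -f y from rfl, deriv.fun_neg]
  rw [hd'] at h
  simp only [Pi.neg_apply] at h
  nlinarith

/-- The discrete energy
`E(n,φ) = (γ/2)·(n−(σ/γ)φ)ᵀQ(n−(σ/γ)φ) + (σ/(2γ))·Σᵢ mᵢφᵢ² + Σᵢ mᵢ·[ψ₊(nᵢ) + ψ̄₋(nᵢ−(σ/γ)φᵢ)]`. -/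
noncomputable def discreteEnergy {N : ℕ} (m : Fin N → ℝ) (Q : Matrix (Fin N) (Fin N) ℝ)
    (σ γ : ℝ) (ψp ψm : ℝ → ℝ) (n φ : Fin N → ℝ) : ℝ :=
  γ / 2 * dotProduct (fun i => n i - σ / γ * φ i)
      (Q.mulVec fun i => n i - σ / γ * φ i)
    + σ / (2 * γ) * ∑ i, m i * φ i ^ 2
    + ∑ i, m i * (ψp (n i) + ψm (n i - σ / γ * φ i))

theorem stmt8 (N : ℕ) (hN : 1 ≤ N)
    (m : Fin N → ℝ) (hm : ∀ i, 0 < m i)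
    (Q U : Matrix (Fin N) (Fin N) ℝ) (hQsym : Q.IsSymm) (hUsym : U.IsSymm)
    (hQpsd : Q.PosSemidef)
    (σ γ Δt : ℝ) (hσ : 0 < σ) (hγ : 0 < γ) (hΔt : 0 < Δt)
    (a b : ℝ) (ψp ψm : ℝ → ℝ)
    (hψp : ConvexOn ℝ (Set.Ioo a b) ψp)
    (hψpdiff : ∀ x ∈ Set.Ioo a b, DifferentiableAt ℝ ψp x)
    (hψm : ConcaveOn ℝ Set.univ ψm)
    (hψmdiff : Differentiable ℝ ψm)
    (nk nk1 : Fin N → ℝ) (hnk : ∀ i, nk i ∈ Set.Ioo a b) (hnk1 : ∀ i, nk1 i ∈ Set.Ioo a b)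
    (φk φk1 ξ : Fin N → ℝ)
    (hξ : ∀ i, ξ i = φk1 i + deriv ψp (nk1 i))
    (hstep : ∀ i, m i * (nk1 i - nk i) = -Δt * (U.mulVec ξ) i)
    (hφeq : ∀ i, σ * (Q.mulVec φk1) i + m i * φk1 i =
      γ * (Q.mulVec nk1) i + m i * deriv ψm (nk i - σ / γ * φk i)) :
    discreteEnergy m Q σ γ ψp ψm nk1 φk1 + Δt * dotProduct ξ (U.mulVec ξ) ≤
      discreteEnergy m Q σ γ ψp ψm nk φk := by
  have hγ0 : γ ≠ 0 := ne_of_gt hγ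
  simp only [discreteEnergy]
  set v1 : Fin N → ℝ := fun i => nk1 i - σ / γ * φk1 i with hv1
  set v0 : Fin N → ℝ := fun i => nk i - σ / γ * φk i with hv0
  set d : Fin N → ℝ := fun i => v1 i - v0 i with hd
  -- symmetry of the Q-form
  have hsym : ∀ x y : Fin N → ℝ,
      dotProduct x (Q.mulVec y) = dotProduct y (Q.mulVec x) := by
    intro x y
    rw [Matrix.dotProduct_mulVec, ← Matrix.mulVec_transpose, hQsym.eq, dotProduct_comm]
  have hquad : dotProduct v1 (Q.mulVec v1) - dotProduct v0 (Q.mulVec v0)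
      = 2 * dotProduct d (Q.mulVec v1) - dotProduct d (Q.mulVec d) := by
    have hv0' : v0 = v1 - d := by funext i; simp [hd]
    rw [hv0']
    simp only [Matrix.mulVec_sub, dotProduct_sub, sub_dotProduct]
    linarith [hsym v1 d]
  have hpsd : 0 ≤ dotProduct d (Q.mulVec d) := by
    have h := hQpsd.dotProduct_mulVec_nonneg d
    simpa using h
  have hQv1 : ∀ i, γ * (Q.mulVec v1) i
      = m i * φk1 i - m i * deriv ψm (nk i - σ / γ * φk i) := by
    intro i
    have hlin : (Q.mulVec v1) i = (Q.mulVec nk1) i - σ / γ * (Q.mulVec φk1) i := by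
      simp only [Matrix.mulVec, dotProduct, hv1, Finset.mul_sum, ← Finset.sum_sub_distrib]
      exact Finset.sum_congr rfl fun j _ => by ring
    rw [hlin]
    have h1 := hφeq i
    have h2 : γ * (σ / γ) = σ := by field_simp
    linear_combination -h1 - (Q.mulVec φk1) i * h2
  -- potential terms
  have hpot : ∑ i, m i * (ψp (nk1 i) + ψm (nk1 i - σ / γ * φk1 i))
      - ∑ i, m i * (ψp (nk i) + ψm (nk i - σ / γ * φk i))
      ≤ ∑ i, m i * (deriv ψp (nk1 i) * (nk1 i - nk i)
          + deriv ψm (nk i - σ / γ * φk i) * d i) := by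
    rw [← Finset.sum_sub_distrib]
    refine Finset.sum_le_sum fun i _ => ?_
    have h1 : ψp (nk1 i) - ψp (nk i) ≤ deriv ψp (nk1 i) * (nk1 i - nk i) :=
      convex_tangent' hψp (hnk1 i) (hnk i) (hψpdiff _ (hnk1 i))
    have h2 : ψm (nk1 i - σ / γ * φk1 i) - ψm (nk i - σ / γ * φk i)
        ≤ deriv ψm (nk i - σ / γ * φk i) * ((nk1 i - σ / γ * φk1 i) - (nk i - σ / γ * φk i)) :=
      concave_tangent' hψm hψmdiff _ _
    have h3 := mul_le_mul_of_nonneg_left (add_le_add h1 h2) (hm i).le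
    have hdi : d i = (nk1 i - σ / γ * φk1 i) - (nk i - σ / γ * φk i) := rfl
    rw [hdi]
    nlinarith [h3]
  -- key identity from the scheme
  have hkey : γ * dotProduct d (Q.mulVec v1)
      + σ / γ * ∑ i, m i * φk1 i * (φk1 i - φk i)
      + ∑ i, m i * (deriv ψp (nk1 i) * (nk1 i - nk i)
          + deriv ψm (nk i - σ / γ * φk i) * d i)
      = -(Δt * dotProduct ξ (U.mulVec ξ)) := by
    simp only [dotProduct, Finset.mul_sum]
    rw [← Finset.sum_add_distrib, ← Finset.sum_add_distrib, ← Finset.sum_neg_distrib]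
    refine Finset.sum_congr rfl fun i _ => ?_
    have h1 := hQv1 i
    have h2 := hstep i
    have h3 := hξ i
    have hdi : d i = (nk1 i - nk i) - σ / γ * (φk1 i - φk i) := by
      show (nk1 i - σ / γ * φk1 i) - (nk i - σ / γ * φk i) = _
      ring
    rw [hdi, h3]
    linear_combination ((nk1 i - nk i) - σ / γ * (φk1 i - φk i)) * h1
      + (φk1 i + deriv ψp (nk1 i)) * h2
  -- assembling
  have hA : γ / 2 * dotProduct v1 (Q.mulVec v1)
      - γ / 2 * dotProduct v0 (Q.mulVec v0)
      = γ * dotProduct d (Q.mulVec v1)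
        - γ / 2 * dotProduct d (Q.mulVec d) := by
    linear_combination (γ / 2) * hquad
  have hB : σ / (2 * γ) * ∑ i, m i * φk1 i ^ 2 - σ / (2 * γ) * ∑ i, m i * φk i ^ 2
      = σ / γ * ∑ i, m i * φk1 i * (φk1 i - φk i)
        - σ / (2 * γ) * ∑ i, m i * (φk1 i - φk i) ^ 2 := by
    have hphi : ∑ i, m i * φk1 i ^ 2 - ∑ i, m i * φk i ^ 2
        = 2 * ∑ i, m i * φk1 i * (φk1 i - φk i) - ∑ i, m i * (φk1 i - φk i) ^ 2 := by
      rw [Finset.mul_sum, ← Finset.sum_sub_distrib, ← Finset.sum_sub_distrib]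
      exact Finset.sum_congr rfl fun i _ => by ring
    linear_combination (σ / (2 * γ)) * hphi
  have hsd2 : 0 ≤ ∑ i, m i * (φk1 i - φk i) ^ 2 :=
    Finset.sum_nonneg fun i _ => by nlinarith [hm i, sq_nonneg (φk1 i - φk i)]
  have hn1 : 0 ≤ γ / 2 * dotProduct d (Q.mulVec d) :=
    mul_nonneg (by linarith) hpsd
  have hn2 : 0 ≤ σ / (2 * γ) * ∑ i, m i * (φk1 i - φk i) ^ 2 :=
    mul_nonneg (by positivity) hsd2
  linarith [hA, hB, hpot, hkey, hn1, hn2]
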